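/- For a, b ∈ ℤ set ν_{a,b} := 𝓜_a ∘ 𝓜_b − q·𝓜_{a+1} ∘ 𝓜_{b−1} (a quantum determinant). Then for all a, b ∈ ℤ the operator 𝓜_{a,b} satisfies the quadratic polynomial relation (q − 1)(q² − t²)(1 − t²) · 𝓜_{a,b} = q(q + t²)·ν_{a,b} − t(1 + q)·ν_{a+1,b−1} + (q + t²)·ν_{b−1,a+1} − q·t(1 + q)·ν_{b−2,a+2}. In particular, every operator 𝓜_{a,b} is an explicit quadratic polynomial in the operators 𝓜ₙ. -/

import Mathlib

open scoped BigOperators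

noncomputable section

/-- The field `F(x₁,…,x_N)` of rational functions in `N` variables over `F`. -/
abbrev RatF (F : Type) [Field F] (N : ℕ) : Type :=
  FractionRing (MvPolynomial (Fin N) F)

/-- The variable `xᵢ` viewed inside the rational function field. -/
noncomputable def Xv (F : Type) [Field F] (N : ℕ) (i : Fin N) : RatF F N :=
  algebraMap (MvPolynomial (Fin N) F) (RatF F N) (MvPolynomial.X i)

/-- The generalized Macdonald operator `𝓜ₙ`:
`𝓜ₙ f = Σᵢ xᵢⁿ · (Πⱼ≠ᵢ (t·xᵢ − xⱼ)/(xᵢ − xⱼ)) · Γᵢ(f)`. -/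
noncomputable def Mac (F : Type) [Field F] (N : ℕ) (t : F)
    (Γ : Fin N → (RatF F N ≃ₐ[F] RatF F N)) (n : ℤ) (f : RatF F N) : RatF F N :=
  ∑ i : Fin N, Xv F N i ^ n *
    (∏ j ∈ Finset.univ.erase i, (t • Xv F N i - Xv F N j) / (Xv F N i - Xv F N j)) *
    Γ i f

/-- The operator `𝓜_{a,b}` built from the generalized Schur function
`s_{a,b}(x,y) = (x^{a+1}y^b − y^{a+1}x^b)/(x−y)`:
`𝓜_{a,b} f = Σ_{i<j} s_{a,b}(xᵢ,xⱼ) · Π_{k∉{i,j}} ((t xᵢ−xₖ)(t xⱼ−xₖ))/((xᵢ−xₖ)(xⱼ−xₖ)) · ΓᵢΓⱼ f`. -/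
noncomputable def MacPair (F : Type) [Field F] (N : ℕ) (t : F)
    (Γ : Fin N → (RatF F N ≃ₐ[F] RatF F N)) (a b : ℤ) (f : RatF F N) : RatF F N :=
  ∑ i : Fin N, ∑ j ∈ Finset.univ.filter (fun j : Fin N => i < j),
    ((Xv F N i ^ (a + 1) * Xv F N j ^ b - Xv F N j ^ (a + 1) * Xv F N i ^ b) /
        (Xv F N i - Xv F N j)) *
      (∏ k ∈ (Finset.univ.erase i).erase j,
        ((t • Xv F N i - Xv F N k) * (t • Xv F N j - Xv F N k)) /
          ((Xv F N i - Xv F N k) * (Xv F N j - Xv F N k))) *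
      Γ i (Γ j f)

/-- The quantum determinant `ν_{a,b} = 𝓜_a𝓜_b − q·𝓜_{a+1}𝓜_{b−1}`. -/
noncomputable def nuOp (F : Type) [Field F] (N : ℕ) (q t : F)
    (Γ : Fin N → (RatF F N ≃ₐ[F] RatF F N)) (a b : ℤ) (f : RatF F N) : RatF F N :=
  Mac F N t Γ a (Mac F N t Γ b f) - q • Mac F N t Γ (a + 1) (Mac F N t Γ (b - 1) f)

/-! ### Auxiliary definitions -/

noncomputable def Acoef (F : Type) [Field F] (N : ℕ) (t : F) (i : Fin N) : RatF F N :=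
  ∏ j ∈ Finset.univ.erase i, (t • Xv F N i - Xv F N j) / (Xv F N i - Xv F N j)

noncomputable def Pcoef (F : Type) [Field F] (N : ℕ) (t : F) (i j : Fin N) : RatF F N :=
  ∏ k ∈ (Finset.univ.erase i).erase j,
    ((t • Xv F N i - Xv F N k) * (t • Xv F N j - Xv F N k)) /
      ((Xv F N i - Xv F N k) * (Xv F N j - Xv F N k))

noncomputable def ccoef (F : Type) [Field F] (N : ℕ) (q t : F) (n m : ℤ) (i j : Fin N) : RatF F N :=
  Xv F N i ^ n * Xv F N j ^ (m - 1) * (t • Xv F N i - Xv F N j) *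
    ((t • Xv F N j - q • Xv F N i) / (Xv F N i - Xv F N j))

namespace Statement9Aux

variable {F : Type} [Field F] {N : ℕ}

/-! ### Nonvanishing -/

lemma alg_inj : Function.Injective (algebraMap (MvPolynomial (Fin N) F) (RatF F N)) :=
  IsFractionRing.injective _ _

lemma Xv_ne_zero (i : Fin N) : Xv F N i ≠ 0 := by
  simpa [Xv, map_ne_zero_iff _ alg_inj] using (MvPolynomial.X_ne_zero (R := F) i)

lemma Xv_sub_ne {i j : Fin N} (h : i ≠ j) : Xv F N i - Xv F N j ≠ 0 := by
  rw [sub_ne_zero]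
  intro hc
  exact h (MvPolynomial.X_injective (alg_inj hc))

lemma smul_Xv_eq (c : F) (i : Fin N) :
    c • Xv F N i
      = algebraMap (MvPolynomial (Fin N) F) (RatF F N) (MvPolynomial.C c * MvPolynomial.X i) := by
  rw [map_mul, Algebra.smul_def, Xv,
    IsScalarTower.algebraMap_apply F (MvPolynomial (Fin N) F) (RatF F N),
    MvPolynomial.algebraMap_eq]

lemma CX_ne {c : F} (hc : c ≠ 0) {i j : Fin N} (h : i ≠ j) :
    MvPolynomial.C c * MvPolynomial.X i ≠ (MvPolynomial.X j : MvPolynomial (Fin N) F) := by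
  intro hE
  have := congrArg (MvPolynomial.coeff (Finsupp.single j 1)) hE
  rw [MvPolynomial.coeff_C_mul, MvPolynomial.coeff_X', MvPolynomial.coeff_X'] at this
  simp [Finsupp.single_eq_single_iff, h, Ne.symm h] at this

lemma smul_Xv_sub_ne {c : F} (hc : c ≠ 0) {i j : Fin N} (h : i ≠ j) :
    c • Xv F N i - Xv F N j ≠ 0 := by
  rw [smul_Xv_eq, sub_ne_zero]
  exact fun hc2 => CX_ne hc h (alg_inj hc2)

lemma Xv_sub_smul_ne {c : F} (hc : c ≠ 0) {i j : Fin N} (h : i ≠ j) :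
    Xv F N j - c • Xv F N i ≠ 0 := by
  intro hE
  exact smul_Xv_sub_ne hc h (by linear_combination -hE)

/-! ### Γ lemmas -/

lemma gamma_smul (g : RatF F N ≃ₐ[F] RatF F N) (c : F) (z : RatF F N) :
    g (c • z) = c • g z := by
  rw [Algebra.smul_def, map_mul, AlgEquiv.commutes, ← Algebra.smul_def]

lemma gamma_zpow (g : RatF F N ≃ₐ[F] RatF F N) (u : RatF F N) (n : ℤ) :
    g (u ^ n) = (g u) ^ n :=
  map_zpow₀ (g : RatF F N →+* RatF F N) u n

lemma gamma_div (g : RatF F N ≃ₐ[F] RatF F N) (u v : RatF F N) :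
    g (u / v) = g u / g v :=
  map_div₀ (g : RatF F N →+* RatF F N) u v

lemma algHom_ext_frac {g h : RatF F N →ₐ[F] RatF F N}
    (H : ∀ i, g (Xv F N i) = h (Xv F N i)) : g = h := by
  have key : (g : RatF F N →+* RatF F N) = (h : RatF F N →+* RatF F N) := by
    apply IsLocalization.ringHom_ext (nonZeroDivisors (MvPolynomial (Fin N) F))
    apply MvPolynomial.ringHom_ext
    · intro r
      have : (algebraMap (MvPolynomial (Fin N) F) (RatF F N)) (MvPolynomial.C r)
          = algebraMap F (RatF F N) r := by
        rw [IsScalarTower.algebraMap_apply F (MvPolynomial (Fin N) F) (RatF F N),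
          MvPolynomial.algebraMap_eq]
      simp only [RingHom.coe_comp, Function.comp_apply, this]
      exact (g.commutes r).trans (h.commutes r).symm
    · intro i
      simpa [Xv] using H i
  refine AlgHom.ext fun x => ?_
  exact congrFun (congrArg (fun (r : RatF F N →+* RatF F N) => (r : RatF F N → RatF F N)) key) x

variable {q t : F} {Γ : Fin N → (RatF F N ≃ₐ[F] RatF F N)}

lemma gamma_comm
    (hΓ : ∀ i j : Fin N, Γ i (Xv F N j) = if j = i then q • Xv F N j else Xv F N j)
    (i j : Fin N) (z : RatF F N) : Γ i (Γ j z) = Γ j (Γ i z) := by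
  have : ((Γ i).toAlgHom.comp (Γ j).toAlgHom) = ((Γ j).toAlgHom.comp (Γ i).toAlgHom) := by
    apply algHom_ext_frac
    intro k
    simp only [AlgHom.coe_comp, Function.comp_apply, AlgEquiv.toAlgHom_eq_coe, AlgHom.coe_coe]
    have gs : ∀ (l : Fin N) (c : F) (z : RatF F N), Γ l (c • z) = c • Γ l z :=
      fun l c z => gamma_smul (Γ l) c z
    by_cases h1 : k = j
    · subst h1
      by_cases h2 : k = i
      · subst h2; rfl
      · simp [gs, hΓ, h2]
    · by_cases h2 : k = i
      · subst h2
        simp [gs, hΓ, h1]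
      · simp [gs, hΓ, h1, h2]
  exact congrFun (congrArg (fun (r : RatF F N →ₐ[F] RatF F N) => (r : RatF F N → RatF F N)) this) z

/-! ### key scalar identity -/

set_option maxHeartbeats 2000000 in
lemma key10 (q t : F) (a b : ℤ) {i j : Fin N} (hij : i ≠ j) :
    (algebraMap F (RatF F N) ((q-1)*(q^2-t^2)*(1-t^2))) *
      ((Xv F N i ^ (a+1) * Xv F N j ^ b - Xv F N j ^ (a+1) * Xv F N i ^ b) / (Xv F N i - Xv F N j))
    = algebraMap F (RatF F N) (q*(q+t^2)) * (ccoef F N q t a b i j + ccoef F N q t a b j i)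
      - algebraMap F (RatF F N) (t*(1+q)) * (ccoef F N q t (a+1) (b-1) i j + ccoef F N q t (a+1) (b-1) j i)
      + algebraMap F (RatF F N) (q+t^2) * (ccoef F N q t (b-1) (a+1) i j + ccoef F N q t (b-1) (a+1) j i)
      - algebraMap F (RatF F N) (q*t*(1+q)) * (ccoef F N q t (b-2) (a+2) i j + ccoef F N q t (b-2) (a+2) j i) := by
  have hX : Xv F N i ≠ 0 := Xv_ne_zero i
  have hY : Xv F N j ≠ 0 := Xv_ne_zero j
  have hXY : Xv F N i - Xv F N j ≠ 0 := Xv_sub_ne hij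
  simp only [ccoef, Algebra.smul_def, map_mul, map_sub, map_add, map_pow, map_one]
  simp only [show a+1-1 = a from by ring, show a+2-1 = a+1 from by ring,
    show b-1-1 = b-2 from by ring]
  have hXb : Xv F N i ^ b = Xv F N i ^ (b-2) * Xv F N i * Xv F N i := by
    conv_lhs => rw [show b = b-2+1+1 from by ring]
    rw [zpow_add_one₀ hX, zpow_add_one₀ hX]
  have hYb : Xv F N j ^ b = Xv F N j ^ (b-2) * Xv F N j * Xv F N j := by
    conv_lhs => rw [show b = b-2+1+1 from by ring]
    rw [zpow_add_one₀ hY, zpow_add_one₀ hY]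
  have hXb1 : Xv F N i ^ (b-1) = Xv F N i ^ (b-2) * Xv F N i := by
    conv_lhs => rw [show b-1 = b-2+1 from by ring]
    rw [zpow_add_one₀ hX]
  have hYb1 : Xv F N j ^ (b-1) = Xv F N j ^ (b-2) * Xv F N j := by
    conv_lhs => rw [show b-1 = b-2+1 from by ring]
    rw [zpow_add_one₀ hY]
  simp only [hXb, hYb, hXb1, hYb1, zpow_add_one₀ hX, zpow_add_one₀ hY]
  generalize Xv F N i ^ a = u
  generalize Xv F N i ^ (b-2) = w
  generalize Xv F N j ^ (b-2) = v
  generalize Xv F N j ^ a = z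
  rw [show Xv F N j - Xv F N i = -(Xv F N i - Xv F N j) from by ring]
  simp only [div_neg, mul_neg, neg_div, mul_add, mul_sub, ← mul_div_assoc, ← neg_div,
    ← add_div, ← sub_div]
  rw [div_eq_div_iff hXY hXY]
  ring

/-! ### Mac composition and ν expansion -/

lemma MacPair_eq (a b : ℤ) (f : RatF F N) :
    MacPair F N t Γ a b f
      = ∑ i : Fin N, ∑ j ∈ Finset.univ.filter (fun j : Fin N => i < j),
          ((Xv F N i ^ (a + 1) * Xv F N j ^ b - Xv F N j ^ (a + 1) * Xv F N i ^ b) /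
              (Xv F N i - Xv F N j)) * Pcoef F N t i j * Γ i (Γ j f) := rfl

lemma Mac_eq (n : ℤ) (f : RatF F N) :
    Mac F N t Γ n f = ∑ i : Fin N, Xv F N i ^ n * Acoef F N t i * Γ i f := rfl

lemma MacMac (n m : ℤ) (f : RatF F N) :
    Mac F N t Γ n (Mac F N t Γ m f)
      = ∑ i : Fin N, ∑ j : Fin N,
          Xv F N i ^ n * Acoef F N t i * Γ i (Xv F N j ^ m * Acoef F N t j * Γ j f) := by
  rw [Mac_eq, Mac_eq]
  refine Finset.sum_congr rfl fun i _ => ?_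
  rw [map_sum, Finset.mul_sum]

lemma gammaA (hΓ : ∀ i j : Fin N, Γ i (Xv F N j) = if j = i then q • Xv F N j else Xv F N j)
    (hq : q ≠ 0) {i j : Fin N} (hij : j ≠ i) :
    Γ i (Acoef F N t j)
      = ((t • Xv F N j - q • Xv F N i) / (Xv F N j - q • Xv F N i)) *
          ∏ k ∈ (Finset.univ.erase j).erase i,
            (t • Xv F N j - Xv F N k) / (Xv F N j - Xv F N k) := by
  rw [Acoef, map_prod]
  have step : ∀ k ∈ Finset.univ.erase j,
      Γ i ((t • Xv F N j - Xv F N k) / (Xv F N j - Xv F N k))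
        = (t • Xv F N j - (if k = i then q • Xv F N k else Xv F N k)) /
            (Xv F N j - (if k = i then q • Xv F N k else Xv F N k)) := by
    intro k _
    rw [gamma_div, map_sub, map_sub, gamma_smul, hΓ i j, if_neg hij, hΓ i k]
  rw [Finset.prod_congr rfl step]
  have hi_mem : i ∈ Finset.univ.erase j := by
    simp [Finset.mem_erase, Ne.symm hij]
  rw [← Finset.mul_prod_erase _ _ hi_mem, if_pos rfl]
  congr 1
  refine Finset.prod_congr rfl fun k hk => ?_
  have hki : k ≠ i := (Finset.mem_erase.mp hk).1
  rw [if_neg hki]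

lemma A_split (t : F) {i j : Fin N} (hij : i ≠ j) :
    Acoef F N t i
      = ((t • Xv F N i - Xv F N j) / (Xv F N i - Xv F N j)) *
          ∏ k ∈ (Finset.univ.erase i).erase j,
            (t • Xv F N i - Xv F N k) / (Xv F N i - Xv F N k) := by
  rw [Acoef]
  have hj_mem : j ∈ Finset.univ.erase i := by
    simp [Finset.mem_erase, Ne.symm hij]
  rw [← Finset.mul_prod_erase _ _ hj_mem]

lemma P_merge (t : F) (i j : Fin N) :
    (∏ k ∈ (Finset.univ.erase i).erase j,
        (t • Xv F N i - Xv F N k) / (Xv F N i - Xv F N k)) *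
      (∏ k ∈ (Finset.univ.erase j).erase i,
        (t • Xv F N j - Xv F N k) / (Xv F N j - Xv F N k))
      = Pcoef F N t i j := by
  rw [Pcoef, show (Finset.univ.erase j).erase i = (Finset.univ.erase i).erase j from
    Finset.erase_right_comm, ← Finset.prod_mul_distrib]
  exact Finset.prod_congr rfl fun k _ => by rw [div_mul_div_comm]

lemma Pcoef_symm (t : F) (i j : Fin N) : Pcoef F N t j i = Pcoef F N t i j := by
  rw [Pcoef, Pcoef, show (Finset.univ.erase j).erase i = (Finset.univ.erase i).erase j from
    Finset.erase_right_comm]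
  exact Finset.prod_congr rfl fun k _ => by ring

lemma diag_term (hΓ : ∀ i j : Fin N, Γ i (Xv F N j) = if j = i then q • Xv F N j else Xv F N j)
    (hq : q ≠ 0) (i : Fin N) (n m : ℤ) (g : RatF F N) :
    Xv F N i ^ n * Acoef F N t i * Γ i (Xv F N i ^ m * Acoef F N t i * g)
      - algebraMap F (RatF F N) q *
        (Xv F N i ^ (n+1) * Acoef F N t i * Γ i (Xv F N i ^ (m-1) * Acoef F N t i * g)) = 0 := by
  have hqX : q • Xv F N i ≠ 0 := smul_ne_zero hq (Xv_ne_zero i)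
  rw [map_mul, map_mul, map_mul, map_mul, gamma_zpow, gamma_zpow, hΓ i i, if_pos rfl]
  rw [zpow_add_one₀ (Xv_ne_zero i)]
  have : (q • Xv F N i) ^ m = (q • Xv F N i) ^ (m-1) * (q • Xv F N i) := by
    conv_lhs => rw [show m = m-1+1 from by ring]
    rw [zpow_add_one₀ hqX]
  rw [this]
  generalize (q • Xv F N i) ^ (m-1) = d
  rw [Algebra.smul_def]
  generalize Xv F N i ^ n = u
  ring

lemma offdiag_term
    (hΓ : ∀ i j : Fin N, Γ i (Xv F N j) = if j = i then q • Xv F N j else Xv F N j)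
    (hq : q ≠ 0) {i j : Fin N} (hij : j ≠ i) (n m : ℤ) (g : RatF F N) :
    Xv F N i ^ n * Acoef F N t i * Γ i (Xv F N j ^ m * Acoef F N t j * Γ j g)
      - algebraMap F (RatF F N) q *
        (Xv F N i ^ (n+1) * Acoef F N t i * Γ i (Xv F N j ^ (m-1) * Acoef F N t j * Γ j g))
      = ccoef F N q t n m i j * Pcoef F N t i j * Γ i (Γ j g) := by
  have hX : Xv F N i ≠ 0 := Xv_ne_zero i
  have hY : Xv F N j ≠ 0 := Xv_ne_zero j
  have hXY : Xv F N i - Xv F N j ≠ 0 := Xv_sub_ne (Ne.symm hij)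
  have hQXY : Xv F N j - q • Xv F N i ≠ 0 := Xv_sub_smul_ne hq (Ne.symm hij)
  rw [map_mul, map_mul, map_mul, map_mul, gamma_zpow, gamma_zpow, hΓ i j, if_neg hij,
    gammaA hΓ hq hij, A_split t (Ne.symm hij), ← P_merge t i j]
  rw [zpow_add_one₀ hX]
  have hm : Xv F N j ^ m = Xv F N j ^ (m-1) * Xv F N j := by
    conv_lhs => rw [show m = m-1+1 from by ring]
    rw [zpow_add_one₀ hY]
  rw [hm, ccoef]
  generalize Xv F N i ^ n = u
  generalize Xv F N j ^ (m-1) = v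
  generalize (∏ k ∈ (Finset.univ.erase i).erase j,
      (t • Xv F N i - Xv F N k) / (Xv F N i - Xv F N k)) = P1
  generalize (∏ k ∈ (Finset.univ.erase j).erase i,
      (t • Xv F N j - Xv F N k) / (Xv F N j - Xv F N k)) = P2
  generalize Γ i (Γ j g) = G
  simp only [Algebra.smul_def]
  have hQXY' : Xv F N j - algebraMap F (RatF F N) q * Xv F N i ≠ 0 := by
    rwa [Algebra.smul_def] at hQXY
  have key2 : (Xv F N j - algebraMap F (RatF F N) q * Xv F N i) *
      (Xv F N j - algebraMap F (RatF F N) q * Xv F N i)⁻¹ = 1 := mul_inv_cancel₀ hQXY'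
  simp only [div_eq_mul_inv]
  linear_combination (u * v * G * P1 * P2 *
    (algebraMap F (RatF F N) t * Xv F N i - Xv F N j) *
    (algebraMap F (RatF F N) t * Xv F N j - algebraMap F (RatF F N) q * Xv F N i) *
    (Xv F N i - Xv F N j)⁻¹) * key2

lemma nu_eq (hΓ : ∀ i j : Fin N, Γ i (Xv F N j) = if j = i then q • Xv F N j else Xv F N j)
    (hq : q ≠ 0) (a b : ℤ) (f : RatF F N) :
    nuOp F N q t Γ a b f
      = ∑ i : Fin N, ∑ j ∈ Finset.univ.erase i,
          ccoef F N q t a b i j * Pcoef F N t i j * Γ i (Γ j f) := by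
  rw [nuOp, MacMac, MacMac, Algebra.smul_def, Finset.mul_sum, ← Finset.sum_sub_distrib]
  refine Finset.sum_congr rfl fun i _ => ?_
  rw [Finset.mul_sum, ← Finset.sum_sub_distrib]
  have hsplit : ∀ (h : Fin N → RatF F N), ∑ j, h j = h i + ∑ j ∈ Finset.univ.erase i, h j :=
    fun h => (Finset.add_sum_erase _ h (Finset.mem_univ i)).symm
  rw [hsplit, diag_term hΓ hq i a b (Γ i f), zero_add]
  refine Finset.sum_congr rfl fun j hj => ?_
  exact offdiag_term hΓ hq (Finset.mem_erase.mp hj).1 a b f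

/-! ### pair symmetrization -/

lemma pair_sum {M : Type} [AddCommMonoid M] (g : Fin N → Fin N → M) :
    ∑ i : Fin N, ∑ j ∈ Finset.univ.erase i, g i j
      = ∑ i : Fin N, ∑ j ∈ Finset.univ.filter (fun j : Fin N => i < j), (g i j + g j i) := by
  have split : ∀ i : Fin N, Finset.univ.erase i
      = (Finset.univ.filter (fun j : Fin N => i < j))
          ∪ (Finset.univ.filter (fun j : Fin N => j < i)) := by
    intro i
    ext j
    simp only [Finset.mem_erase, Finset.mem_union, Finset.mem_filter, Finset.mem_univ,
      true_and, and_true]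
    constructor
    · exact fun h => h.symm.lt_or_gt
    · rintro (h | h)
      · exact ne_of_gt h
      · exact ne_of_lt h
  have hdisj : ∀ i : Fin N,
      Disjoint (Finset.univ.filter (fun j : Fin N => i < j))
        (Finset.univ.filter (fun j : Fin N => j < i)) := by
    intro i
    rw [Finset.disjoint_filter]
    intro j _ h1 h2
    exact absurd h2 (not_lt_of_gt h1)
  calc ∑ i : Fin N, ∑ j ∈ Finset.univ.erase i, g i j
      = ∑ i : Fin N, (∑ j ∈ Finset.univ.filter (fun j : Fin N => i < j), g i j
          + ∑ j ∈ Finset.univ.filter (fun j : Fin N => j < i), g i j) := by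
        refine Finset.sum_congr rfl fun i _ => ?_
        rw [split i, Finset.sum_union (hdisj i)]
    _ = ∑ i : Fin N, ∑ j ∈ Finset.univ.filter (fun j : Fin N => i < j), g i j
          + ∑ i : Fin N, ∑ j ∈ Finset.univ.filter (fun j : Fin N => j < i), g i j := by
        rw [Finset.sum_add_distrib]
    _ = ∑ i : Fin N, ∑ j ∈ Finset.univ.filter (fun j : Fin N => i < j), g i j
          + ∑ i : Fin N, ∑ j ∈ Finset.univ.filter (fun j : Fin N => i < j), g j i := by
        congr 1
        refine Finset.sum_comm' ?_
        intro x y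
        simp only [Finset.mem_univ, Finset.mem_filter, true_and, and_true]
    _ = ∑ i : Fin N, ∑ j ∈ Finset.univ.filter (fun j : Fin N => i < j), (g i j + g j i) := by
        rw [← Finset.sum_add_distrib]
        exact Finset.sum_congr rfl fun i _ => by rw [← Finset.sum_add_distrib]

end Statement9Aux

open Statement9Aux

/-- the quadratic polynomial expression for `𝓜_{a,b}`:
`(q−1)(q²−t²)(1−t²)·𝓜_{a,b} = q(q+t²)ν_{a,b} − t(1+q)ν_{a+1,b−1} + (q+t²)ν_{b−1,a+1}
− qt(1+q)ν_{b−2,a+2}`. -/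
theorem statement9 (F : Type) [Field F] [CharZero F] (q t : F) (hq : q ≠ 0) (ht : t ≠ 0)
    (N : ℕ) (hN : 1 ≤ N)
    (Γ : Fin N → (RatF F N ≃ₐ[F] RatF F N))
    (hΓ : ∀ i j : Fin N, Γ i (Xv F N j) = if j = i then q • Xv F N j else Xv F N j)
    (a b : ℤ) (f : RatF F N) :
    ((q - 1) * (q ^ 2 - t ^ 2) * (1 - t ^ 2)) • MacPair F N t Γ a b f
      = (q * (q + t ^ 2)) • nuOp F N q t Γ a b f
        - (t * (1 + q)) • nuOp F N q t Γ (a + 1) (b - 1) f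
        + (q + t ^ 2) • nuOp F N q t Γ (b - 1) (a + 1) f
        - (q * t * (1 + q)) • nuOp F N q t Γ (b - 2) (a + 2) f := by
  rw [nu_eq hΓ hq, nu_eq hΓ hq, nu_eq hΓ hq, nu_eq hΓ hq, MacPair_eq]
  simp only [Algebra.smul_def, Finset.mul_sum]
  simp only [← Finset.sum_sub_distrib, ← Finset.sum_add_distrib]
  rw [pair_sum (fun i j =>
    algebraMap F (RatF F N) (q * (q + t ^ 2)) * (ccoef F N q t a b i j * Pcoef F N t i j * Γ i (Γ j f))
    - algebraMap F (RatF F N) (t * (1 + q)) * (ccoef F N q t (a+1) (b-1) i j * Pcoef F N t i j * Γ i (Γ j f))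
    + algebraMap F (RatF F N) (q + t ^ 2) * (ccoef F N q t (b-1) (a+1) i j * Pcoef F N t i j * Γ i (Γ j f))
    - algebraMap F (RatF F N) (q * t * (1 + q)) * (ccoef F N q t (b-2) (a+2) i j * Pcoef F N t i j * Γ i (Γ j f)))]
  refine Finset.sum_congr rfl fun i _ => Finset.sum_congr rfl fun j hj => ?_
  have hij : i < j := (Finset.mem_filter.mp hj).2
  have hne : i ≠ j := ne_of_lt hij
  rw [Pcoef_symm t i j, gamma_comm hΓ j i f]
  have H := key10 q t a b hne
  linear_combination (Pcoef F N t i j * Γ i (Γ j f)) * H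


end
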